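/- Fix an integer t ≥ 1, let R_t(r) = Σ_{i=0}^t r^i/i!, for y ∈ (0,t) let r_0(y) be the unique positive solution of r·R_t'(r)/R_t(r) = y, and let s(y) := r_0(y)·(d/dx)[x·R_t'(x)/R_t(x)] at x = r_0(y). Then as y → t from below, s(y) = (t/r_0(y))·(1 + O(1/r_0(y))); that is, (r_0(y)/t)·s(y) − 1 = O(1/r_0(y)) as y ↑ t. -/

import Mathlib

open Filter Asymptotics Set

/-- `R_t(r) = Σ_{i=0}^t r^i / i!`. -/
noncomputable def Rt (t : ℕ) (r : ℝ) : ℝ :=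
  ∑ i ∈ Finset.range (t + 1), r ^ i / (i.factorial : ℝ)

/-- `F_t(r) = r · R_t'(r) / R_t(r)`. -/
noncomputable def Ft (t : ℕ) (r : ℝ) : ℝ := r * deriv (Rt t) r / Rt t r

lemma hasDerivAt_Rt (t : ℕ) (r : ℝ) :
    HasDerivAt (Rt t) (Rt t r - r ^ t / (t.factorial : ℝ)) r := by
  have h : HasDerivAt (Rt t)
      (∑ i ∈ Finset.range (t + 1), (i : ℝ) * r ^ (i - 1) / (i.factorial : ℝ)) r := by
    apply HasDerivAt.fun_sum
    intro i _
    simpa using (hasDerivAt_pow i r).div_const (i.factorial : ℝ)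
  convert h using 1
  rw [Finset.sum_range_succ' (fun i => (i : ℝ) * r ^ (i - 1) / (i.factorial : ℝ)) t]
  simp only [Nat.cast_zero, zero_mul, zero_div, add_zero]
  have : ∀ i : ℕ, ((i : ℝ) + 1) * r ^ i / (((i + 1).factorial : ℕ) : ℝ) = r ^ i / (i.factorial : ℝ) := by
    intro i
    rw [Nat.factorial_succ]
    have h1 : ((i:ℝ)+1) ≠ 0 := by positivity
    have h2 : (i.factorial : ℝ) ≠ 0 := by positivity
    push_cast
    field_simp
  simp only [Nat.cast_add, Nat.cast_one, Nat.add_sub_cancel]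
  rw [Rt, Finset.sum_range_succ]
  rw [Finset.sum_congr rfl (fun i _ => (this i).symm)]
  ring

lemma deriv_Rt (t : ℕ) : deriv (Rt t) = fun r => Rt t r - r ^ t / (t.factorial : ℝ) :=
  funext fun r => (hasDerivAt_Rt t r).deriv

lemma Rt_pos (t : ℕ) {r : ℝ} (hr : 0 ≤ r) : 0 < Rt t r := by
  rw [Rt]
  apply Finset.sum_pos'
  · intro i _; positivity
  · exact ⟨0, Finset.mem_range.2 (Nat.succ_pos t), by norm_num⟩

lemma Ft_lt (t : ℕ) (ht : 1 ≤ t) {r : ℝ} (hr : 0 ≤ r) : Ft t r < t := by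
  have hP := Rt_pos t hr
  rw [Ft, deriv_Rt, div_lt_iff₀ hP]
  -- r * (Rt t r - r^t/t!) < t * Rt t r
  have h1 : r * (Rt t r - r ^ t / (t.factorial : ℝ)) = ∑ i ∈ Finset.range t, r ^ (i+1) / (i.factorial : ℝ) := by
    rw [Rt, Finset.sum_range_succ]
    rw [show ∀ a b : ℝ, r * (a + b - b) = r * a from fun a b => by ring]
    rw [Finset.mul_sum]
    refine Finset.sum_congr rfl fun i _ => ?_
    ring
  have h2 : ∑ i ∈ Finset.range t, r ^ (i+1) / (i.factorial : ℝ)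
      ≤ ∑ i ∈ Finset.range t, (t : ℝ) * (r ^ (i+1) / ((i+1).factorial : ℝ)) := by
    refine Finset.sum_le_sum fun i hi => ?_
    rw [Nat.factorial_succ]
    have hi' : (i : ℝ) + 1 ≤ t := by
      have := Finset.mem_range.1 hi; exact_mod_cast Nat.succ_le_of_lt this
    have h2a : r ^ (i+1) / (((i+1) : ℝ) * (i.factorial : ℝ)) * ((i:ℝ)+1) = r ^ (i+1) / (i.factorial : ℝ) := by
      have : ((i:ℝ)+1) ≠ 0 := by positivity
      field_simp
    push_cast
    calc r ^ (i+1) / (i.factorial : ℝ) = r ^ (i+1) / (((i+1) : ℝ) * (i.factorial : ℝ)) * ((i:ℝ)+1) := h2a.symm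
    _ ≤ r ^ (i+1) / (((i+1) : ℝ) * (i.factorial : ℝ)) * t := by
        apply mul_le_mul_of_nonneg_left hi'
        positivity
    _ = (t : ℝ) * (r ^ (i+1) / (((i:ℝ)+1) * (i.factorial : ℝ))) := by ring
  have h3 : ∑ i ∈ Finset.range t, (t : ℝ) * (r ^ (i+1) / ((i+1).factorial : ℝ))
      = (t : ℝ) * (Rt t r - 1) := by
    rw [← Finset.mul_sum]
    congr 1
    rw [Rt, Finset.sum_range_succ' (fun i => r ^ i / (i.factorial : ℝ)) t]
    simp
  have ht' : (0:ℝ) < t := by exact_mod_cast ht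
  calc r * (Rt t r - r ^ t / (t.factorial : ℝ)) ≤ (t:ℝ) * (Rt t r - 1) := by
        rw [h1]; exact h2.trans (le_of_eq h3)
  _ < (t:ℝ) * Rt t r := by nlinarith

noncomputable def cc (t j : ℕ) : ℝ := ∏ k ∈ Finset.range j, ((t : ℝ) - k)

lemma cc_zero (t : ℕ) : cc t 0 = 1 := by simp [cc]

lemma cc_succ (t j : ℕ) : cc t (j + 1) = cc t j * ((t : ℝ) - j) := by
  rw [cc, Finset.prod_range_succ, cc]

lemma cc_nonneg (t j : ℕ) : 0 ≤ cc t j := by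
  rcases le_or_gt j t with h | h
  · apply Finset.prod_nonneg
    intro k hk
    have : k < j := Finset.mem_range.1 hk
    have : (k:ℝ) ≤ t := by
      have : k ≤ t := le_trans (Nat.le_of_lt_succ (Nat.lt_succ_of_lt ‹k < j›)) h
      exact_mod_cast this
    linarith
  · have : cc t j = 0 := Finset.prod_eq_zero (Finset.mem_range.2 h) (by simp)
    rw [this]

lemma cc_eq_zero (t j : ℕ) (h : t < j) : cc t j = 0 :=
  Finset.prod_eq_zero (Finset.mem_range.2 h) (by simp)

lemma cc_mul_factorial (t : ℕ) : ∀ j, j ≤ t → cc t j * (((t - j).factorial : ℕ) : ℝ) = (t.factorial : ℝ) := by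
  intro j
  induction j with
  | zero => simp [cc_zero]
  | succ n ih =>
    intro h
    have hn : n ≤ t := Nat.le_of_succ_le h
    have h1 : t - n = (t - (n+1)) + 1 := by omega
    have := ih hn
    rw [h1, Nat.factorial_succ] at this
    rw [cc_succ]
    have h2 : ((t:ℝ) - n) = ((t - (n+1) : ℕ) : ℝ) + 1 := by
      push_cast [Nat.cast_sub h]
      ring
    push_cast at this
    rw [h2]
    calc cc t n * (((t - (n+1) : ℕ) : ℝ) + 1) * (((t - (n+1)).factorial : ℕ) : ℝ)
        = cc t n * ((((t - (n+1) : ℕ) : ℝ) + 1) * (((t - (n+1)).factorial : ℕ) : ℝ)) := by ring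
      _ = (t.factorial : ℝ) := this

noncomputable def Sp (t : ℕ) : Polynomial ℝ :=
  ∑ j ∈ Finset.range t, Polynomial.C (cc t (j + 1)) * Polynomial.X ^ j

noncomputable def Bp (t : ℕ) : Polynomial ℝ := 1 + Polynomial.X * Sp t

noncomputable def Kp (t : ℕ) : Polynomial ℝ :=
  Bp t ^ 2 - Polynomial.C ((t : ℝ) + 1) * Bp t + Sp t
    - Polynomial.C (t : ℝ) * Polynomial.X ^ 2 * Bp t ^ 2

lemma Sp_coeff (t n : ℕ) : (Sp t).coeff n = cc t (n + 1) := by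
  rw [Sp, Polynomial.finset_sum_coeff]
  simp only [Polynomial.coeff_C_mul, Polynomial.coeff_X_pow]
  rcases lt_or_ge n t with h | h
  · rw [Finset.sum_eq_single n]
    · simp
    · intro b _ hb; simp [hb.symm]
    · intro hn; exact absurd (Finset.mem_range.2 h) hn
  · rw [Finset.sum_eq_zero, cc_eq_zero t (n+1) (by omega)]
    intro b hb
    have : b < t := Finset.mem_range.1 hb
    have hbn : ¬ (n = b) := by omega
    simp [hbn]

lemma Bp_coeff_zero (t : ℕ) : (Bp t).coeff 0 = 1 := by
  simp [Bp]

lemma Bp_coeff_succ (t n : ℕ) : (Bp t).coeff (n + 1) = cc t (n + 1) := by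
  simp [Bp, Polynomial.coeff_X_mul, Sp_coeff, Polynomial.coeff_one]

lemma Bsq_coeff (t n : ℕ) : ((Bp t) ^ 2).coeff n
    = ∑ i ∈ Finset.range (n + 1), (Bp t).coeff i * (Bp t).coeff (n - i) := by
  rw [sq, Polynomial.coeff_mul, Finset.Nat.sum_antidiagonal_eq_sum_range_succ_mk]

lemma Kp_coeff_small (t : ℕ) (ht : 1 ≤ t) : ∀ d < 3, (Kp t).coeff d = 0 := by
  have hc1 : cc t 1 = (t : ℝ) := by rw [cc_succ, cc_zero]; simp
  have hc2 : cc t 2 = (t : ℝ) * ((t:ℝ) - 1) := by rw [cc_succ, hc1]; push_cast; ring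
  have hc3 : cc t 3 = (t : ℝ) * ((t:ℝ) - 1) * ((t:ℝ) - 2) := by rw [cc_succ, hc2]; push_cast; ring
  have hX : ∀ d, (Polynomial.C (t : ℝ) * Polynomial.X ^ 2 * (Bp t) ^ 2).coeff d
      = if 2 ≤ d then (t : ℝ) * ((Bp t) ^ 2).coeff (d - 2) else 0 := by
    intro d
    rw [mul_right_comm, Polynomial.coeff_mul_X_pow', Polynomial.coeff_C_mul]
  have hB0 := Bp_coeff_zero t
  have hB1 : (Bp t).coeff 1 = (t:ℝ) := by
    rw [show (1:ℕ) = 0 + 1 from rfl, Bp_coeff_succ, hc1]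
  have hB2 : (Bp t).coeff 2 = (t:ℝ) * ((t:ℝ) - 1) := by
    rw [show (2:ℕ) = 1 + 1 from rfl, Bp_coeff_succ, hc2]
  intro d hd
  interval_cases d <;>
    simp only [Kp, Polynomial.coeff_sub, Polynomial.coeff_add, Polynomial.coeff_C_mul,
      Sp_coeff, hX, Bsq_coeff, Finset.sum_range_succ, Finset.sum_range_zero,
      Nat.sub_zero, Nat.sub_self, show (2:ℕ) - 1 = 1 from rfl, show (1:ℕ) - 1 = 0 from rfl,
      show (2:ℕ) - 2 = 0 from rfl, hB0, hB1, hB2, hc1, hc2, hc3] <;>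
    norm_num <;> ring

lemma Sp_eval_nonneg (t : ℕ) {x : ℝ} (hx : 0 ≤ x) : 0 ≤ (Sp t).eval x := by
  rw [Sp]
  simp only [Polynomial.eval_finset_sum, Polynomial.eval_mul, Polynomial.eval_C,
    Polynomial.eval_pow, Polynomial.eval_X]
  apply Finset.sum_nonneg
  intro i _
  exact mul_nonneg (cc_nonneg t (i+1)) (pow_nonneg hx i)

lemma Bp_eval (t : ℕ) (x : ℝ) : (Bp t).eval x = 1 + x * (Sp t).eval x := by
  simp [Bp]

lemma Bp_eval_ge_one (t : ℕ) {x : ℝ} (hx : 0 ≤ x) : 1 ≤ (Bp t).eval x := by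
  rw [Bp_eval]
  nlinarith [Sp_eval_nonneg t hx, hx]

lemma Bp_eval_Rt (t : ℕ) (ht : 1 ≤ t) {r : ℝ} (hr : 0 < r) :
    r ^ t * (Bp t).eval (1 / r) = (t.factorial : ℝ) * Rt t r := by
  have hr' : r ≠ 0 := ne_of_gt hr
  rw [Bp_eval]
  have hS : (Sp t).eval (1/r) = ∑ j ∈ Finset.range t, cc t (j+1) * (1/r) ^ j := by
    rw [Sp, Polynomial.eval_finset_sum]
    simp only [Polynomial.eval_mul, Polynomial.eval_C, Polynomial.eval_pow, Polynomial.eval_X]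
  rw [hS, mul_add, mul_one, Finset.mul_sum, Finset.mul_sum]
  have hterm : ∀ j ∈ Finset.range t,
      r ^ t * (1/r * (cc t (j+1) * (1/r) ^ j)) = cc t (j+1) * r ^ (t - 1 - j) := by
    intro j hj
    have hj' : j < t := Finset.mem_range.1 hj
    have hsplit : t = (t - 1 - j) + (j + 1) := by omega
    rw [show r ^ t = r ^ (t - 1 - j) * r ^ (j + 1) by rw [← pow_add, ← hsplit]]
    simp only [one_div, inv_pow]
    field_simp
    ring
  rw [Finset.sum_congr rfl hterm]
  -- reindex : ∑_{j ∈ range t} cc t (j+1) * r^(t-1-j) = ∑_{i ∈ range t} cc t (t-i) * r^i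
  rw [show ∑ j ∈ Finset.range t, cc t (j+1) * r ^ (t - 1 - j)
      = ∑ j ∈ Finset.range t, cc t (t - j) * r ^ j from by
    rw [← Finset.sum_range_reflect]
    refine Finset.sum_congr rfl fun j hj => ?_
    have hj' : j < t := Finset.mem_range.1 hj
    rw [show t - 1 - j + 1 = t - j from by omega, show t - 1 - (t - 1 - j) = j from by omega]]
  have hcc : ∀ j ∈ Finset.range t, cc t (t - j) * r ^ j = (t.factorial : ℝ) * (r ^ j / (j.factorial : ℝ)) := by
    intro j hj
    have hj' : j < t := Finset.mem_range.1 hj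
    have h1 : cc t (t - j) * (((t - (t - j)).factorial : ℕ) : ℝ) = (t.factorial : ℝ) :=
      cc_mul_factorial t (t - j) (by omega)
    rw [show t - (t - j) = j from by omega] at h1
    have hf : (j.factorial : ℝ) ≠ 0 := by positivity
    field_simp
    linear_combination h1
  rw [Finset.sum_congr rfl hcc]
  rw [Rt, Finset.mul_sum, Finset.sum_range_succ]
  have hfin : (t.factorial : ℝ) * (r ^ t / (t.factorial : ℝ)) = r ^ t := by
    have : (t.factorial : ℝ) ≠ 0 := by positivity
    field_simp
  rw [hfin]; ring

lemma key (t : ℕ) (ht : 1 ≤ t) :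
    ∃ C : ℝ, 0 ≤ C ∧ ∀ r : ℝ, 1 ≤ r → |r ^ 2 * deriv (Ft t) r - t| ≤ C / r := by
  obtain ⟨q, hq⟩ : ∃ q, Kp t = Polynomial.X ^ 3 * q := Polynomial.X_pow_dvd_iff.2 (Kp_coeff_small t ht)
  obtain ⟨C, hC⟩ := (isCompact_Icc (a := (0:ℝ)) (b := 1)).exists_bound_of_continuousOn
    (Polynomial.continuous_aeval q).continuousOn
  have hC0 : 0 ≤ C := le_trans (norm_nonneg _) (hC 0 (by norm_num))
  refine ⟨C, hC0, ?_⟩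
  intro r hr
  have hr0 : (0:ℝ) < r := lt_of_lt_of_le one_pos hr
  have hrne : r ≠ 0 := ne_of_gt hr0
  set x := 1 / r with hxdef
  have hx0 : 0 < x := by positivity
  have hx1 : x ≤ 1 := by rw [hxdef, div_le_one hr0]; exact hr
  have hxne : x ≠ 0 := ne_of_gt hx0
  set s := (Sp t).eval x with hsdef
  have hs : 0 ≤ s := Sp_eval_nonneg t hx0.le
  have hbs : (Bp t).eval x = 1 + x * s := Bp_eval t x
  have hb1 : 1 ≤ (Bp t).eval x := Bp_eval_ge_one t hx0.le
  have hbne : (1:ℝ) + x * s ≠ 0 := by rw [← hbs]; intro h; rw [h] at hb1; linarith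
  have hBP : r ^ t * (Bp t).eval x = (t.factorial:ℝ) * Rt t r := Bp_eval_Rt t ht hr0
  have hfne : (t.factorial : ℝ) ≠ 0 := by positivity
  have hqe : (Bp t).eval x ^ 2 - ((t:ℝ)+1) * (Bp t).eval x + s - (t:ℝ) * x^2 * (Bp t).eval x ^ 2
      = x ^ 3 * q.eval x := by
    have h := congrArg (Polynomial.eval x) hq
    simp only [Kp, Polynomial.eval_sub, Polynomial.eval_add, Polynomial.eval_mul,
      Polynomial.eval_pow, Polynomial.eval_C, Polynomial.eval_X] at h
    rw [← hsdef] at h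
    exact h
  have hqe' : q.eval x = ((Bp t).eval x ^ 2 - ((t:ℝ)+1) * (Bp t).eval x + s
      - (t:ℝ) * x^2 * (Bp t).eval x ^ 2) / x ^ 3 := by
    rw [hqe]; field_simp
  have hP : Rt t r ≠ 0 := ne_of_gt (Rt_pos t hr0.le)
  have hPval : Rt t r = r ^ t * (Bp t).eval x / (t.factorial:ℝ) := by
    rw [eq_div_iff hfne]; linarith [hBP]
  -- derivative of Ft at r
  have hFt : Ft t = fun z => z * (Rt t z - z ^ t / (t.factorial:ℝ)) / Rt t z := by
    funext z; rw [Ft, deriv_Rt]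
  have hw : HasDerivAt (fun z : ℝ => z ^ t / (t.factorial:ℝ))
      ((t:ℝ) * r ^ (t-1) / (t.factorial:ℝ)) r := (hasDerivAt_pow t r).div_const _
  have h1 : HasDerivAt (fun z : ℝ => z * (Rt t z - z ^ t / (t.factorial:ℝ)))
      (1 * (Rt t r - r ^ t / (t.factorial:ℝ))
        + r * (Rt t r - r ^ t / (t.factorial:ℝ) - (t:ℝ) * r ^ (t-1) / (t.factorial:ℝ))) r :=
    (hasDerivAt_id' (x := r)).mul ((hasDerivAt_Rt t r).sub hw)
  have h2 := (h1.div (hasDerivAt_Rt t r) hP).deriv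
  have hderiv : deriv (Ft t) r =
      ((1 * (Rt t r - r ^ t / (t.factorial:ℝ))
          + r * (Rt t r - r ^ t / (t.factorial:ℝ) - (t:ℝ) * r ^ (t-1) / (t.factorial:ℝ))) * Rt t r
        - (r * (Rt t r - r ^ t / (t.factorial:ℝ))) * (Rt t r - r ^ t / (t.factorial:ℝ)))
        / (Rt t r) ^ 2 := by
    rw [hFt]; exact h2
  have hpow' : r ^ (t - 1) = r ^ t / r := by
    rw [eq_div_iff hrne, ← pow_succ]
    congr 1
    omega
  have hrtne : r ^ t ≠ 0 := pow_ne_zero _ hrne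
  have hid : r ^ 2 * deriv (Ft t) r - t = x * q.eval x / (Bp t).eval x ^ 2 := by
    rw [hderiv, hqe', hPval, hbs, hpow', hxdef]
    field_simp
    ring
  -- bound
  rw [hid]
  have hq1 : |q.eval x| ≤ C := by
    have := hC x ⟨hx0.le, hx1⟩
    simpa [Polynomial.coe_aeval_eq_eval, Real.norm_eq_abs] using this
  have hb2 : (1:ℝ) ≤ (Bp t).eval x ^ 2 := by nlinarith
  rw [abs_div, abs_mul]
  have h5 : |x| * |q.eval x| ≤ x * C := by
    rw [abs_of_pos hx0]
    exact mul_le_mul_of_nonneg_left hq1 hx0.le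
  have h6 : |(Bp t).eval x ^ 2| = (Bp t).eval x ^ 2 := abs_of_pos (by nlinarith)
  rw [h6]
  calc |x| * |q.eval x| / (Bp t).eval x ^ 2 ≤ x * C / 1 := by
        apply div_le_div₀ (by positivity) h5 one_pos hb2
  _ = C / r := by rw [hxdef]; field_simp

lemma continuous_Rt (t : ℕ) : Continuous (Rt t) := by
  unfold Rt
  exact continuous_finset_sum _ fun i _ => (continuous_pow i).div_const _

lemma tendsto_r0 (t : ℕ) (ht : 1 ≤ t) (r0 : ℝ → ℝ)
    (hr0 : ∀ y ∈ Set.Ioo (0:ℝ) t, 0 < r0 y ∧ Ft t (r0 y) = y) :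
    Tendsto r0 (nhdsWithin (t:ℝ) (Set.Iio (t:ℝ))) atTop := by
  have ht' : (0:ℝ) < t := by exact_mod_cast ht
  rw [tendsto_atTop]
  intro M
  set M' := max M 1 with hM'
  have hM'1 : (1:ℝ) ≤ M' := le_max_right _ _
  have hFt : Ft t = fun z => z * (Rt t z - z ^ t / (t.factorial:ℝ)) / Rt t z :=
    funext fun z => by rw [Ft, deriv_Rt]
  have hcont : ContinuousOn (Ft t) (Set.Icc 0 M') := by
    rw [hFt]
    apply ContinuousOn.div
    · exact (continuous_id.mul ((continuous_Rt t).sub ((continuous_pow t).div_const _))).continuousOn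
    · exact (continuous_Rt t).continuousOn
    · intro z hz; exact ne_of_gt (Rt_pos t hz.1)
  obtain ⟨z0, hz0mem, hz0max⟩ := isCompact_Icc.exists_isMaxOn
    (Set.nonempty_Icc.2 (by linarith)) hcont
  set c := max (Ft t z0) 0 with hc
  have hc_lt : c < t := max_lt (Ft_lt t ht hz0mem.1) ht'
  have hmem : Set.Ioo c (t:ℝ) ∈ nhdsWithin (t:ℝ) (Set.Iio (t:ℝ)) :=
    Ioo_mem_nhdsLT_of_mem ⟨hc_lt, le_refl _⟩
  filter_upwards [hmem] with y hy
  have hyIoo : y ∈ Set.Ioo (0:ℝ) t := ⟨lt_of_le_of_lt (le_max_right _ 0) hy.1, hy.2⟩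
  obtain ⟨hpos, hFy⟩ := hr0 y hyIoo
  by_contra hcon
  push_neg at hcon
  have hr0mem : r0 y ∈ Set.Icc (0:ℝ) M' :=
    ⟨hpos.le, le_trans hcon.le (le_max_left _ _)⟩
  have hle : Ft t (r0 y) ≤ Ft t z0 := hz0max hr0mem
  rw [hFy] at hle
  have : y ≤ c := le_trans hle (le_max_left _ _)
  linarith [hy.1]

/-- `s(y) = r_0(y) · (d/dx)[x R_t'(x)/R_t(x)]|_{x = r_0(y)}`. -/
noncomputable def sfun (t : ℕ) (r0 : ℝ → ℝ) (y : ℝ) : ℝ :=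
  r0 y * deriv (Ft t) (r0 y)

theorem stmt8 (t : ℕ) (ht : 1 ≤ t) (r0 : ℝ → ℝ)
    (hr0 : ∀ y ∈ Set.Ioo (0 : ℝ) t, 0 < r0 y ∧ Ft t (r0 y) = y) :
    (fun y : ℝ => r0 y / (t : ℝ) * sfun t r0 y - 1)
      =O[nhdsWithin (t : ℝ) (Set.Iio (t : ℝ))] (fun y : ℝ => 1 / r0 y) := by
  have ht' : (0:ℝ) < t := by exact_mod_cast ht
  obtain ⟨C, hC0, hC⟩ := key t ht
  have htend := tendsto_r0 t ht r0 hr0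
  rw [isBigO_iff]
  refine ⟨C / t, ?_⟩
  have hIoo : Set.Ioo (0:ℝ) (t:ℝ) ∈ nhdsWithin (t:ℝ) (Set.Iio (t:ℝ)) :=
    Ioo_mem_nhdsLT_of_mem ⟨ht', le_refl _⟩
  have h1 : ∀ᶠ y in nhdsWithin (t:ℝ) (Set.Iio (t:ℝ)), 1 ≤ r0 y :=
    htend.eventually_ge_atTop 1
  filter_upwards [hIoo, h1] with y hy hr1
  obtain ⟨hpos, -⟩ := hr0 y hy
  have hb := hC (r0 y) hr1
  have heq : r0 y / t * sfun t r0 y - 1 = (r0 y ^ 2 * deriv (Ft t) (r0 y) - t) / t := by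
    rw [sfun]
    field_simp
  rw [heq, Real.norm_eq_abs, Real.norm_eq_abs, abs_div, abs_of_pos ht',
    abs_of_pos (a := 1 / r0 y) (by positivity)]
  calc |r0 y ^ 2 * deriv (Ft t) (r0 y) - t| / (t:ℝ) ≤ (C / r0 y) / t :=
        (div_le_div_iff_of_pos_right ht').2 hb
  _ = C / t * (1 / r0 y) := by
        rw [mul_one_div, div_div, mul_comm (r0 y) (t:ℝ), div_div]
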